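/- arXiv:1302.5733 — 3 statements merged into one kernel-verified Lean document; each statement's English description precedes it below -/
import Mathlib

section
/- Let P₁ and P₂ be orthogonal projections on a finite-dimensional complex inner product space, and let x be a real number with 0 ≤ x ≤ 1. Then xP₁ + P₂ ≥ (x/(1+x))·(1−P₁)P₂(1−P₁) in the Loewner (positive semidefinite) order. -/
open scoped ComplexOrder
open scoped Matrix

lemma aux_smul {m : ℕ} {M : Matrix (Fin m) (Fin m) ℂ} (hM : M.PosSemidef)
    {r : ℝ} (hr : 0 ≤ r) : ((r : ℂ) • M).PosSemidef := by
  constructor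
  · simpa [Matrix.IsHermitian, Matrix.conjTranspose_smul, Complex.conj_ofReal] using
      congrArg (fun N => (r:ℂ) • N) hM.1
  · intro v
    have := hM.2 v
    have e : (v.sum fun i xi => v.sum fun j xj => star xi * ((r:ℂ) • M) i j * xj)
        = (r:ℂ) * v.sum fun i xi => v.sum fun j xj => star xi * M i j * xj := by
      simp only [Finsupp.sum, Finset.mul_sum, Matrix.smul_apply, smul_eq_mul]
      refine Finset.sum_congr rfl fun i _ => Finset.sum_congr rfl fun j _ => ?_
      ring
    rw [e]
    exact mul_nonneg (by exact_mod_cast hr) this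

theorem stmt_0 {m : ℕ} (P₁ P₂ : Matrix (Fin m) (Fin m) ℂ)
    (h₁ : P₁.IsHermitian) (h₁' : P₁ * P₁ = P₁)
    (h₂ : P₂.IsHermitian) (h₂' : P₂ * P₂ = P₂)
    (x : ℝ) (hx0 : 0 ≤ x) (hx1 : x ≤ 1) :
    ((x : ℂ) • P₁ + P₂ -
      ((x / (1 + x) : ℝ) : ℂ) • ((1 - P₁) * P₂ * (1 - P₁))).PosSemidef := by
  have hpos : (0:ℝ) < 1 + x := by linarith
  have hne : (1 + (x:ℂ)) ≠ 0 := by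
    exact_mod_cast (ne_of_gt (show (0:ℂ) < ((1+x:ℝ):ℂ) by exact_mod_cast hpos))
  set A := (1 - P₂) * P₁ with hA
  set B := P₂ * (1 + (x:ℂ) • P₁) with hB
  have key : ((x : ℂ) • P₁ + P₂ -
      ((x / (1 + x) : ℝ) : ℂ) • ((1 - P₁) * P₂ * (1 - P₁)))
      = (x : ℂ) • (Aᴴ * A) + ((1 / (1 + x) : ℝ) : ℂ) • (Bᴴ * B) := by
    have hstar : star (x:ℂ) = (x:ℂ) := by simp [Complex.star_def, Complex.conj_ofReal]
    have e1 : ∀ X, P₁ * (P₁ * X) = P₁ * X := fun X => by rw [← mul_assoc, h₁']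
    have e2 : ∀ X, P₂ * (P₂ * X) = P₂ * X := fun X => by rw [← mul_assoc, h₂']
    simp only [hA, hB, Matrix.conjTranspose_mul, Matrix.conjTranspose_one,
      Matrix.conjTranspose_sub, Matrix.conjTranspose_add, Matrix.conjTranspose_smul, Complex.conj_ofReal, h₁.eq, h₂.eq,
      starRingEnd_apply]
    push_cast
    simp only [mul_add, add_mul, mul_sub, sub_mul, mul_one, one_mul,
      Matrix.mul_smul, Matrix.smul_mul, smul_smul, mul_assoc, e1, e2, h₁', h₂', hstar]
    match_scalars <;> field_simp <;> ring
  rw [key]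
  exact (aux_smul (Matrix.posSemidef_conjTranspose_mul_self A) hx0).add
    (aux_smul (Matrix.posSemidef_conjTranspose_mul_self B) (by positivity))
end

section
/- Let P₁ and P₂ be orthogonal projections on a finite-dimensional complex inner product space, and let α be a real number with 0 ≤ α ≤ 1. Then P₁ + P₂ ≥ α·P₁ + ((1−α)/(2−α))·(1−P₁)P₂(1−P₁) in the Loewner order. -/
open scoped ComplexOrder

private lemma smul_psd {n : ℕ} {M : Matrix (Fin n) (Fin n) ℂ} (hM : M.PosSemidef)
    {r : ℝ} (hr : 0 ≤ r) : ((r : ℂ) • M).PosSemidef := by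
  refine Matrix.posSemidef_iff_dotProduct_mulVec.mpr ⟨?_, fun x => ?_⟩
  · unfold Matrix.IsHermitian
    rw [Matrix.conjTranspose_smul, hM.1.eq]
    simp
  · rw [Matrix.smul_mulVec, dotProduct_smul]
    exact mul_nonneg (by exact_mod_cast hr) (hM.dotProduct_mulVec_nonneg x)

theorem stmt_1 {m : ℕ} (P₁ P₂ : Matrix (Fin m) (Fin m) ℂ)
    (h₁ : P₁.IsHermitian) (h₁' : P₁ * P₁ = P₁)
    (h₂ : P₂.IsHermitian) (h₂' : P₂ * P₂ = P₂)
    (α : ℝ) (hα0 : 0 ≤ α) (hα1 : α ≤ 1) :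
    (P₁ + P₂ -
      (((α : ℂ) • P₁ +
        (((1 - α) / (2 - α) : ℝ) : ℂ) • ((1 - P₁) * P₂ * (1 - P₁))))).PosSemidef := by
  have h2α : (0:ℝ) < 2 - α := by linarith
  set c : ℝ := (1 - α) / (2 - α) with hc
  set d : ℝ := 1 / (2 - α) with hd
  have hc0 : 0 ≤ c := div_nonneg (by linarith) h2α.le
  have hd0 : 0 ≤ d := by positivity
  set N : Matrix (Fin m) (Fin m) ℂ := ((1 - α : ℝ) : ℂ) • P₁ + P₂ with hN
  set T : Matrix (Fin m) (Fin m) ℂ := (1 - P₂) * P₁ with hT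
  have key : P₁ + P₂ -
      (((α : ℂ) • P₁ + ((c : ℝ) : ℂ) • ((1 - P₁) * P₂ * (1 - P₁)))) =
      ((d : ℝ) : ℂ) • (N.conjTranspose * N) + ((c : ℝ) : ℂ) • (T.conjTranspose * T) := by
    have eN : N.conjTranspose = N := by
      rw [hN]
      rw [Matrix.conjTranspose_add, Matrix.conjTranspose_smul, h₁.eq, h₂.eq]
      simp
    have eT : T.conjTranspose = P₁ * (1 - P₂) := by
      rw [hT, Matrix.conjTranspose_mul, Matrix.conjTranspose_sub, h₁.eq, h₂.eq]
      simp
    rw [eN, eT, hN, hT]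
    have e1 : ∀ M : Matrix (Fin m) (Fin m) ℂ, P₁ * (P₁ * M) = P₁ * M := by
      intro M; rw [← mul_assoc, h₁']
    have e2 : ∀ M : Matrix (Fin m) (Fin m) ℂ, P₂ * (P₂ * M) = P₂ * M := by
      intro M; rw [← mul_assoc, h₂']
    simp only [mul_add, add_mul, mul_sub, sub_mul, smul_mul_assoc, mul_smul_comm,
      one_mul, mul_one, mul_assoc, e1, e2, h₁', h₂', smul_smul, smul_sub, smul_add]
    have hne : (2 - (α:ℂ)) ≠ 0 := by
      intro h
      have : (2:ℂ) = (α:ℂ) := by linear_combination h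
      have : (2:ℝ) = α := by exact_mod_cast this
      linarith
    rw [hc, hd]
    match_scalars <;> push_cast <;> field_simp <;> ring
  rw [key]
  exact (smul_psd (Matrix.posSemidef_conjTranspose_mul_self N) hd0).add
    (smul_psd (Matrix.posSemidef_conjTranspose_mul_self T) hc0)
end

section
/- Let P₁ and P₂ be orthogonal projections on a finite-dimensional complex inner product space and let α ∈ [0,1]. Then (1/2)P₁ + P₂ ≥ (α/2)P₁ + ((1−α)/(3−α))·(1−P₁)P₂(1−P₁) in the Loewner order. -/
open scoped ComplexOrder
open Matrix

lemma psd_smul {n : ℕ} {M : Matrix (Fin n) (Fin n) ℂ} (hM : M.PosSemidef) {c : ℝ} (hc : 0 ≤ c) :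
    ((c : ℂ) • M).PosSemidef := by
  constructor
  · unfold Matrix.IsHermitian
    rw [conjTranspose_smul, hM.1.eq]
    simp
  · intro x
    exact (hM.smul (a := (c:ℂ)) (by exact_mod_cast hc)).2 x

theorem stmt_2 {m : ℕ} (P₁ P₂ : Matrix (Fin m) (Fin m) ℂ)
    (h₁ : P₁.IsHermitian) (h₁' : P₁ * P₁ = P₁)
    (h₂ : P₂.IsHermitian) (h₂' : P₂ * P₂ = P₂)
    (α : ℝ) (hα0 : 0 ≤ α) (hα1 : α ≤ 1) :
    (((1 / 2 : ℝ) : ℂ) • P₁ + P₂ -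
      (((α / 2 : ℝ) : ℂ) • P₁ +
        (((1 - α) / (3 - α) : ℝ) : ℂ) • ((1 - P₁) * P₂ * (1 - P₁)))).PosSemidef := by
  have hden : (3 - α) ≠ 0 := by linarith
  set r : ℝ := (1 - α) / (3 - α) with hrdef
  have hr : r * (3 - α) = 1 - α := by
    rw [hrdef, div_mul_cancel₀ _ hden]
  have hrC : (r : ℂ) * (3 - (α:ℂ)) = 1 - (α:ℂ) := by
    exact_mod_cast congrArg (Complex.ofReal) hr
  have hr0 : 0 ≤ r := div_nonneg (by linarith) (by linarith)
  have hr1 : r ≤ 1 := by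
    rw [hrdef, div_le_one (by linarith)]; linarith
  clear_value r
  set Y : Matrix (Fin m) (Fin m) ℂ := ((1 - α : ℝ) : ℂ) • P₁ + (2:ℂ) • P₂ with hYdef
  set Z : Matrix (Fin m) (Fin m) ℂ := P₁ * (1 - P₂) with hZdef
  have a1 : ∀ X : Matrix (Fin m) (Fin m) ℂ, P₁ * (P₁ * X) = P₁ * X := fun X => by
    rw [← mul_assoc, h₁']
  have a2 : ∀ X : Matrix (Fin m) (Fin m) ℂ, P₂ * (P₂ * X) = P₂ * X := fun X => by
    rw [← mul_assoc, h₂']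
  have hY : Yᴴ = Y := by
    simp [hYdef, conjTranspose_smul, h₁.eq, h₂.eq, Complex.conj_ofReal]
  have hZt : Zᴴ = (1 - P₂) * P₁ := by
    simp [hZdef, conjTranspose_mul, h₁.eq, h₂.eq]
  have key : (((1 / 2 : ℝ) : ℂ) • P₁ + P₂ -
      (((α / 2 : ℝ) : ℂ) • P₁ + ((r : ℝ) : ℂ) • ((1 - P₁) * P₂ * (1 - P₁)))) =
      (((1 - r)/4 : ℝ) : ℂ) • (Yᴴ * Y) + ((r : ℝ) : ℂ) • (Z * Zᴴ) := by
    rw [hY, hZt, hYdef, hZdef]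
    push_cast
    simp only [mul_add, add_mul, mul_sub, sub_mul, one_mul, mul_one, smul_mul_assoc,
      mul_smul_comm, smul_smul, mul_assoc, h₁', h₂', a1, a2, smul_add, smul_sub]
    match_scalars <;> (try ring)
    · linear_combination (-(1 + (α:ℂ))/4) * hrC
    · linear_combination ((1:ℂ)/2) * hrC
    · linear_combination ((1:ℂ)/2) * hrC
  rw [key]
  have hc1 : (0:ℝ) ≤ (1 - r)/4 := by linarith
  exact (psd_smul (posSemidef_conjTranspose_mul_self Y) hc1).add
    (psd_smul (posSemidef_self_mul_conjTranspose Z) hr0)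
end
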